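/- Let N_i, N_j be nilpotent n_i×n_i and n_j×n_j complex matrices with ‖N_i‖, ‖N_j‖ ≤ 1 and N_i^{n_i} = 0, N_j^{n_j} = 0, n_i + n_j ≤ 2n. Let γ ∈ ℂ with |γ| ≥ ρ, where 0 < ρ ≤ 1. If matrices X, Y satisfy γ X = N_i X - X N_j + Y, then ‖X‖ ≤ (2/ρ)^{2n-1} ‖Y‖. -/

import Mathlib

open Matrix

/-- The (Euclidean) operator norm of a complex matrix. -/
noncomputable def opNorm {ι κ : Type*} [Fintype ι] [Fintype κ] [DecidableEq κ]
    (M : Matrix ι κ ℂ) : ℝ :=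
  ‖LinearMap.toContinuousLinearMap (Matrix.toEuclideanLin M)‖

section Aux

set_option linter.unusedSectionVars false

variable {ι κ μ : Type*} [Fintype ι] [Fintype κ] [Fintype μ] [DecidableEq ι] [DecidableEq κ]
  [DecidableEq μ]

lemma opNorm_nonneg' (M : Matrix ι κ ℂ) : 0 ≤ opNorm M := norm_nonneg _

lemma opNorm_zero' : opNorm (0 : Matrix ι κ ℂ) = 0 := by
  simp [opNorm]

lemma opNorm_smul' (c : ℂ) (M : Matrix ι κ ℂ) : opNorm (c • M) = ‖c‖ * opNorm M := by
  simp only [opNorm, _root_.map_smul]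
  exact norm_smul c (LinearMap.toContinuousLinearMap (Matrix.toEuclideanLin M))

lemma opNorm_sub_le' (A B : Matrix ι κ ℂ) : opNorm (A - B) ≤ opNorm A + opNorm B := by
  simp only [opNorm, map_sub]
  exact norm_sub_le _ _

lemma opNorm_sum_le' {α : Type*} (s : Finset α) (f : α → Matrix ι κ ℂ) :
    opNorm (∑ i ∈ s, f i) ≤ ∑ i ∈ s, opNorm (f i) := by
  simp only [opNorm, map_sum]
  exact norm_sum_le _ _

lemma toEuclideanLin_mul' (A : Matrix ι κ ℂ) (B : Matrix κ μ ℂ) :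
    Matrix.toEuclideanLin (A * B) =
      (Matrix.toEuclideanLin A).comp (Matrix.toEuclideanLin B) := by
  apply LinearMap.ext
  intro v
  simp [Matrix.toEuclideanLin_apply, Matrix.mulVec_mulVec]

lemma opNorm_mul_le' (A : Matrix ι κ ℂ) (B : Matrix κ μ ℂ) :
    opNorm (A * B) ≤ opNorm A * opNorm B := by
  have h : (LinearMap.toContinuousLinearMap (Matrix.toEuclideanLin (A * B))) =
      (LinearMap.toContinuousLinearMap (Matrix.toEuclideanLin A)).comp
        (LinearMap.toContinuousLinearMap (Matrix.toEuclideanLin B)) := by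
    ext v
    simp [toEuclideanLin_mul']
  rw [opNorm, h]
  exact ContinuousLinearMap.opNorm_comp_le _ _

/-- Left multiplication as an endomorphism of rectangular matrices. -/
noncomputable def lmulEnd (A : Matrix ι ι ℂ) : Module.End ℂ (Matrix ι κ ℂ) where
  toFun Z := A * Z
  map_add' _ _ := Matrix.mul_add _ _ _
  map_smul' _ _ := Matrix.mul_smul _ _ _

/-- Right multiplication as an endomorphism of rectangular matrices. -/
noncomputable def rmulEnd (B : Matrix κ κ ℂ) : Module.End ℂ (Matrix ι κ ℂ) where
  toFun Z := Z * B
  map_add' _ _ := Matrix.add_mul _ _ _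
  map_smul' _ _ := Matrix.smul_mul _ _ _

@[simp] lemma lmulEnd_apply (A : Matrix ι ι ℂ) (Z : Matrix ι κ ℂ) :
    lmulEnd A Z = A * Z := rfl

@[simp] lemma rmulEnd_apply (B : Matrix κ κ ℂ) (Z : Matrix ι κ ℂ) :
    rmulEnd B Z = Z * B := rfl

lemma lmulEnd_pow (A : Matrix ι ι ℂ) (k : ℕ) :
    (lmulEnd A : Module.End ℂ (Matrix ι κ ℂ)) ^ k = lmulEnd (A ^ k) := by
  induction k with
  | zero => apply LinearMap.ext; intro Z; simp
  | succ k ih =>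
      apply LinearMap.ext; intro Z
      rw [pow_succ, Module.End.mul_apply, ih]
      simp [pow_succ, pow_succ', Matrix.mul_assoc]

lemma rmulEnd_pow (B : Matrix κ κ ℂ) (k : ℕ) :
    (rmulEnd B : Module.End ℂ (Matrix ι κ ℂ)) ^ k = rmulEnd (B ^ k) := by
  induction k with
  | zero => apply LinearMap.ext; intro Z; simp
  | succ k ih =>
      apply LinearMap.ext; intro Z
      rw [pow_succ, Module.End.mul_apply, ih]
      simp only [rmulEnd_apply]
      rw [Matrix.mul_assoc, ← pow_succ']

lemma commute_lmulEnd_rmulEnd (A : Matrix ι ι ℂ) (B : Matrix κ κ ℂ) :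
    Commute (lmulEnd A : Module.End ℂ (Matrix ι κ ℂ)) (rmulEnd B) := by
  apply LinearMap.ext
  intro Z
  simp [Module.End.mul_apply, Matrix.mul_assoc]

lemma matpow_eq_zero_of_le {A : Matrix ι ι ℂ} {a k : ℕ} (h : a ≤ k)
    (hA : A ^ a = 0) : A ^ k = 0 := by
  rw [← Nat.sub_add_cancel h, pow_add, hA, Matrix.mul_zero]

lemma lmul_sub_rmul_nilpotent (A : Matrix ι ι ℂ) (B : Matrix κ κ ℂ)
    {a b : ℕ} (hA : A ^ a = 0) (hB : B ^ b = 0) (ha : 1 ≤ a) (hb : 1 ≤ b) :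
    ((lmulEnd A : Module.End ℂ (Matrix ι κ ℂ)) - rmulEnd B) ^ (a + b - 1) = 0 := by
  set m := a + b - 1 with hm
  have hcomm : Commute (lmulEnd A : Module.End ℂ (Matrix ι κ ℂ)) (-rmulEnd B) :=
    (commute_lmulEnd_rmulEnd A B).neg_right
  have hbinom := hcomm.add_pow m
  rw [← sub_eq_add_neg] at hbinom
  rw [hbinom]
  apply Finset.sum_eq_zero
  intro k hk
  rcases le_or_gt a k with h | h
  · have hAk : A ^ k = 0 := matpow_eq_zero_of_le h hA
    rw [lmulEnd_pow, hAk]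
    have : (lmulEnd (0 : Matrix ι ι ℂ) : Module.End ℂ (Matrix ι κ ℂ)) = 0 := by
      apply LinearMap.ext; intro Z; simp
    rw [this, zero_mul, zero_mul]
  · have hbk : b ≤ m - k := by omega
    have hBk : B ^ (m - k) = 0 := matpow_eq_zero_of_le hbk hB
    have hnegB : ((-B) : Matrix κ κ ℂ) ^ (m - k) = 0 := by
      have : ((-B) : Matrix κ κ ℂ) ^ b = 0 := by rw [neg_pow, hB, mul_zero]
      exact matpow_eq_zero_of_le hbk this
    have hneg : (-rmulEnd B : Module.End ℂ (Matrix ι κ ℂ)) = rmulEnd (-B) := by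
      apply LinearMap.ext; intro Z; simp
    have h0 : (rmulEnd (0 : Matrix κ κ ℂ) : Module.End ℂ (Matrix ι κ ℂ)) = 0 := by
      apply LinearMap.ext; intro Z; simp
    rw [hneg, rmulEnd_pow, hnegB, h0, mul_zero, zero_mul]

lemma geom_aux {q : ℝ} (hq : 2 ≤ q) : ∀ m : ℕ, 1 ≤ m →
    ∑ k ∈ Finset.range m, q ^ (k + 1) ≤ 2 * q ^ m := by
  intro m hm
  induction m with
  | zero => omega
  | succ m ih =>
      rcases Nat.eq_zero_or_pos m with rfl | hm'
      · simp [pow_one]; nlinarith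
      · have h1 := ih hm'
        rw [Finset.sum_range_succ]
        have hqpos : (0 : ℝ) ≤ q ^ m := by positivity
        have : 2 * q ^ m ≤ q ^ (m + 1) := by
          rw [pow_succ]; nlinarith
        calc ∑ k ∈ Finset.range m, q ^ (k + 1) + q ^ (m + 1)
            ≤ 2 * q ^ m + q ^ (m + 1) := by linarith
          _ ≤ q ^ (m + 1) + q ^ (m + 1) := by linarith
          _ = 2 * q ^ (m + 1) := by ring

end Aux

/-- If `N_i`, `N_j` are nilpotent contractions with `N_i^{n_i} = 0`,
`N_j^{n_j} = 0`, `n_i + n_j ≤ 2n`, and `γ X = N_i X - X N_j + Y` with `|γ| ≥ ρ`,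
`0 < ρ ≤ 1`, then `‖X‖ ≤ (2/ρ)^{2n-1} ‖Y‖`. -/
theorem sylvester_small_divisor_estimate
    (n ni nj : ℕ) (hsum : ni + nj ≤ 2 * n)
    (Ni : Matrix (Fin ni) (Fin ni) ℂ) (Nj : Matrix (Fin nj) (Fin nj) ℂ)
    (hNi : opNorm Ni ≤ 1) (hNj : opNorm Nj ≤ 1)
    (hNi0 : Ni ^ ni = 0) (hNj0 : Nj ^ nj = 0)
    (γ : ℂ) (ρ : ℝ) (hρ0 : 0 < ρ) (hρ1 : ρ ≤ 1) (hγ : ρ ≤ ‖γ‖)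
    (X Y : Matrix (Fin ni) (Fin nj) ℂ)
    (heq : γ • X = Ni * X - X * Nj + Y) :
    opNorm X ≤ (2 / ρ) ^ (2 * n - 1) * opNorm Y := by
  have hq2 : (2 : ℝ) ≤ 2 / ρ := by
    rw [le_div_iff₀ hρ0]; nlinarith
  have hq0 : (0 : ℝ) < 2 / ρ := by positivity
  have hRHS : 0 ≤ (2 / ρ) ^ (2 * n - 1) * opNorm Y := by
    have := opNorm_nonneg' Y
    positivity
  -- trivial cases
  rcases Nat.eq_zero_or_pos ni with rfl | hni
  · have hX : X = 0 := by ext i j; exact i.elim0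
    rw [hX, opNorm_zero']
    exact hRHS
  rcases Nat.eq_zero_or_pos nj with rfl | hnj
  · have hX : X = 0 := by ext i j; exact j.elim0
    rw [hX, opNorm_zero']
    exact hRHS
  -- main case
  have hγ0 : γ ≠ 0 := by
    intro h
    rw [h] at hγ
    simp at hγ
    linarith
  have hγnorm : ‖γ‖ ≥ ρ := by exact hγ
  set L : Module.End ℂ (Matrix (Fin ni) (Fin nj) ℂ) := lmulEnd Ni - rmulEnd Nj with hL
  have hLX : ∀ Z, L Z = Ni * Z - Z * Nj := fun Z => rfl
  have hXrec : X = γ⁻¹ • (L X + Y) := by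
    have : γ⁻¹ • (γ • X) = γ⁻¹ • (L X + Y) := by rw [heq]; rw [hLX]
    rwa [smul_smul, inv_mul_cancel₀ hγ0, one_smul] at this
  have key : ∀ mm : ℕ, X = (∑ k ∈ Finset.range mm, (γ⁻¹ ^ (k + 1)) • ((L ^ k) Y)) +
      γ⁻¹ ^ mm • ((L ^ mm) X) := by
    intro mm
    induction mm with
    | zero => simp
    | succ m ih =>
        rw [Finset.sum_range_succ]
        conv_lhs => rw [ih]
        have hsub : (L ^ m) X = (L ^ m) (γ⁻¹ • (L X + Y)) := by rw [← hXrec]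
        have hcomp : (L ^ m) (L X) = (L ^ (m + 1)) X := by
          rw [pow_succ, Module.End.mul_apply]
        rw [hsub, _root_.map_smul, _root_.map_add, smul_smul, ← pow_succ, hcomp, smul_add]
        abel
  set m : ℕ := ni + nj - 1 with hm
  have hm1 : 1 ≤ m := by omega
  have hmle : m ≤ 2 * n - 1 := by omega
  have hLnil : L ^ m = 0 := lmul_sub_rmul_nilpotent Ni Nj hNi0 hNj0 hni hnj
  have hXsum : X = ∑ k ∈ Finset.range m, (γ⁻¹ ^ (k + 1)) • ((L ^ k) Y) := by
    have := key m
    rwa [hLnil, LinearMap.zero_apply, smul_zero, add_zero] at this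
  -- norm of L
  have hLnorm : ∀ Z, opNorm (L Z) ≤ 2 * opNorm Z := by
    intro Z
    rw [hLX]
    calc opNorm (Ni * Z - Z * Nj) ≤ opNorm (Ni * Z) + opNorm (Z * Nj) := opNorm_sub_le' _ _
      _ ≤ opNorm Ni * opNorm Z + opNorm Z * opNorm Nj := by
          exact add_le_add (opNorm_mul_le' _ _) (opNorm_mul_le' _ _)
      _ ≤ 1 * opNorm Z + opNorm Z * 1 := by
          have h0 := opNorm_nonneg' Z
          exact add_le_add (mul_le_mul_of_nonneg_right hNi h0)
            (mul_le_mul_of_nonneg_left hNj h0)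
      _ = 2 * opNorm Z := by ring
  have hLpow : ∀ k : ℕ, opNorm ((L ^ k) Y) ≤ 2 ^ k * opNorm Y := by
    intro k
    induction k with
    | zero => simp
    | succ k ih =>
        have : (L ^ (k + 1)) Y = L ((L ^ k) Y) := by
          rw [pow_succ', Module.End.mul_apply]
        rw [this]
        calc opNorm (L ((L ^ k) Y)) ≤ 2 * opNorm ((L ^ k) Y) := hLnorm _
          _ ≤ 2 * (2 ^ k * opNorm Y) := by linarith
          _ = 2 ^ (k + 1) * opNorm Y := by ring
  have hγinv : ‖γ⁻¹‖ ≤ 1 / ρ := by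
    rw [norm_inv, one_div]
    exact inv_anti₀ hρ0 hγnorm
  have hterm : ∀ k : ℕ, (1 / ρ) ^ (k + 1) * (2 ^ k * opNorm Y)
      = (2 / ρ) ^ (k + 1) * (opNorm Y / 2) := by
    intro k
    rw [div_pow, div_pow, one_pow, pow_succ]
    field_simp
    ring
  have hY2 : 0 ≤ opNorm Y / 2 := by have := opNorm_nonneg' Y; linarith
  calc opNorm X
      = opNorm (∑ k ∈ Finset.range m, (γ⁻¹ ^ (k + 1)) • ((L ^ k) Y)) := by rw [← hXsum]
    _ ≤ ∑ k ∈ Finset.range m, opNorm ((γ⁻¹ ^ (k + 1)) • ((L ^ k) Y)) :=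
        opNorm_sum_le' _ _
    _ ≤ ∑ k ∈ Finset.range m, (1 / ρ) ^ (k + 1) * (2 ^ k * opNorm Y) := by
        apply Finset.sum_le_sum
        intro k _
        rw [opNorm_smul', norm_pow]
        exact mul_le_mul (pow_le_pow_left₀ (norm_nonneg _) hγinv _) (hLpow k)
          (opNorm_nonneg' _) (by positivity)
    _ = (∑ k ∈ Finset.range m, (2 / ρ) ^ (k + 1)) * (opNorm Y / 2) := by
        rw [Finset.sum_mul]
        exact Finset.sum_congr rfl fun k _ => hterm k
    _ ≤ (2 * (2 / ρ) ^ m) * (opNorm Y / 2) :=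
        mul_le_mul_of_nonneg_right (geom_aux hq2 m hm1) hY2
    _ = (2 / ρ) ^ m * opNorm Y := by ring
    _ ≤ (2 / ρ) ^ (2 * n - 1) * opNorm Y :=
        mul_le_mul_of_nonneg_right
          (pow_le_pow_right₀ (by linarith : (1:ℝ) ≤ 2 / ρ) hmle) (opNorm_nonneg' Y)
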